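/- Consider a monotone maxout network of size s in which the j-th unit has its own rank k_j ≥ 2, i.e., f = z_s where z_j(x) = max_{i=1,…,k_j} ( Σ_{m=1}^d a^i_{m,j} x_m + Σ_{l<j} w^i_{l,j} z_l(x) ) with all weights nonnegative. Then the epigraph epi(f) = {(x,t) ∈ ℝ^d × ℝ : t ≥ f(x)} satisfies xc(epi(f)) ≤ Σ_{j=1}^{s} k_j. -/

import Mathlib

open Finset Pointwise

def IsPolytope {d : ℕ} (P : Set (Fin d → ℝ)) : Prop :=
  ∃ V : Finset (Fin d → ℝ), V.Nonempty ∧ P = convexHull ℝ (V : Set (Fin d → ℝ))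

noncomputable def suppFn {d : ℕ} (P : Set (Fin d → ℝ)) (c : Fin d → ℝ) : ℝ :=
  sSup ((fun x => ∑ m, c m * x m) '' P)

def HasExtFormOfSize {d : ℕ} (P : Set (Fin d → ℝ)) (m : ℕ) : Prop :=
  ∃ (e m' : ℕ) (A : Matrix (Fin m) (Fin e) ℝ) (b : Fin m → ℝ)
    (C : Matrix (Fin m') (Fin e) ℝ) (d' : Fin m' → ℝ)
    (π : (Fin e → ℝ) →ᵃ[ℝ] (Fin d → ℝ)),
    π '' {y | A.mulVec y ≤ b ∧ C.mulVec y = d'} = P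

noncomputable def xc {d : ℕ} (P : Set (Fin d → ℝ)) : ℕ :=
  sInf {m | HasExtFormOfSize P m}

def MaxoutComputes {d : ℕ} (k s : ℕ) (a : Fin s → Fin k → Fin d → ℝ)
    (w : Fin s → Fin k → Fin s → ℝ) (f : (Fin d → ℝ) → ℝ) : Prop :=
  ∃ (z : Fin s → (Fin d → ℝ) → ℝ) (hs : 0 < s),
    (∀ j x, IsGreatest (Set.range fun i : Fin k =>
        ∑ m, a j i m * x m +
        ∑ l ∈ Finset.univ.filter (fun l => l < j), w j i l * z l x) (z j x)) ∧
    f = z ⟨s - 1, Nat.sub_lt hs Nat.one_pos⟩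

def IsMaxoutNetwork {d : ℕ} (k s : ℕ) (f : (Fin d → ℝ) → ℝ) : Prop :=
  ∃ (a : Fin s → Fin k → Fin d → ℝ) (w : Fin s → Fin k → Fin s → ℝ),
    MaxoutComputes k s a w f

def IsMonotoneMaxoutNetwork {d : ℕ} (k s : ℕ) (f : (Fin d → ℝ) → ℝ) : Prop :=
  ∃ (a : Fin s → Fin k → Fin d → ℝ) (w : Fin s → Fin k → Fin s → ℝ),
    (∀ j i m, 0 ≤ a j i m) ∧ (∀ j i l, 0 ≤ w j i l) ∧ MaxoutComputes k s a w f

def epiSet {d : ℕ} (f : (Fin d → ℝ) → ℝ) : Set (Fin (d + 1) → ℝ) :=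
  {p | f (fun m => p m.castSucc) ≤ p (Fin.last d)}

def argmaxSet {d : ℕ} (c : Fin d → ℝ) (S : Set (Fin d → ℝ)) : Set (Fin d → ℝ) :=
  {x | x ∈ S ∧ ∀ y ∈ S, ∑ m, c m * y m ≤ ∑ m, c m * x m}

def iterFaces {d : ℕ} (c : Fin d → Fin d → ℝ) (S : Set (Fin d → ℝ)) : ℕ → Set (Fin d → ℝ)
  | 0 => S
  | i + 1 => if h : i < d then argmaxSet (c ⟨i, h⟩) (iterFaces c S i) else iterFaces c S i

noncomputable def vxc {d : ℕ} (P : Set (Fin d → ℝ)) : ℕ :=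
  sInf {m | ∃ Q R : Set (Fin d → ℝ), IsPolytope Q ∧ IsPolytope R ∧ P + Q = R ∧ m = xc Q + xc R}

def coneGen {d : ℕ} (S : Set (Fin d → ℝ)) : Set (Fin d → ℝ) :=
  ⋂₀ {K | S ⊆ K ∧ Convex ℝ K ∧ ∀ x ∈ K, ∀ t : ℝ, 0 < t → t • x ∈ K}

def polarCone {d : ℕ} (K : Set (Fin d → ℝ)) : Set (Fin d → ℝ) :=
  {z | ∀ y ∈ K, ∑ i, z i * y i ≤ 0}

/-- for a monotone maxout network of size `s` with unit-dependent ranks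
`k j ≥ 2`, the epigraph of the computed function has extension complexity at most `Σ_j k j`. -/
theorem xc_epigraph_monotone_maxout_varrank {d s : ℕ} (hs : 0 < s)
    (k : Fin s → ℕ) (hk : ∀ j, 2 ≤ k j)
    (a : (j : Fin s) → Fin (k j) → Fin d → ℝ)
    (w : (j : Fin s) → Fin (k j) → Fin s → ℝ)
    (ha : ∀ j i m, 0 ≤ a j i m) (hw : ∀ j i l, 0 ≤ w j i l)
    (z : Fin s → (Fin d → ℝ) → ℝ)
    (hz : ∀ j x, IsGreatest (Set.range fun i : Fin (k j) =>
        ∑ m, a j i m * x m +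
          ∑ l ∈ Finset.univ.filter (fun l => l < j), w j i l * z l x) (z j x))
    (f : (Fin d → ℝ) → ℝ) (hf : f = z ⟨s - 1, Nat.sub_lt hs Nat.one_pos⟩) :
    ∃ m ≤ ∑ j, k j, HasExtFormOfSize (epiSet f) m := by
  classical
  refine ⟨∑ j, k j, le_refl _, ?_⟩
  -- index equivalence
  have hcard : Fintype.card (Σ j : Fin s, Fin (k j)) = ∑ j, k j := by
    simp [Fintype.card_sigma]
  let ε : (Σ j : Fin s, Fin (k j)) ≃ Fin (∑ j, k j) := Fintype.equivFinOfCardEq hcard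
  set slast : Fin s := ⟨s - 1, Nat.sub_lt hs Nat.one_pos⟩ with hslast
  -- row of the inequality matrix for a pair (j,i)
  let row : (Σ j : Fin s, Fin (k j)) → Fin (d + s) → ℝ := fun σ =>
    Fin.append (fun m => a σ.1 σ.2 m)
      (fun l => (if l < σ.1 then w σ.1 σ.2 l else 0) - (if l = σ.1 then 1 else 0))
  let A : Matrix (Fin (∑ j, k j)) (Fin (d + s)) ℝ := fun r c => row (ε.symm r) c
  let g : Fin (d + 1) → Fin (d + s) :=
    Fin.lastCases (Fin.natAdd d slast) (fun m => Fin.castAdd s m)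
  let π : (Fin (d + s) → ℝ) →ᵃ[ℝ] (Fin (d + 1) → ℝ) :=
    (LinearMap.funLeft ℝ ℝ g).toAffineMap
  refine ⟨d + s, 0, A, 0, 0, 0, π, ?_⟩
  have hπ : ∀ y : Fin (d + s) → ℝ, π y = fun i => y (g i) := fun y => rfl
  -- value of row ⬝ y
  have hrowdot : ∀ (σ : Σ j : Fin s, Fin (k j)) (y : Fin (d + s) → ℝ),
      ∑ c, row σ c * y c =
        (∑ m, a σ.1 σ.2 m * y (Fin.castAdd s m) +
          ∑ l ∈ Finset.univ.filter (fun l => l < σ.1), w σ.1 σ.2 l * y (Fin.natAdd d l))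
          - y (Fin.natAdd d σ.1) := by
    intro σ y
    rw [Fin.sum_univ_add]
    have h1 : ∀ m : Fin d, row σ (Fin.castAdd s m) * y (Fin.castAdd s m)
        = a σ.1 σ.2 m * y (Fin.castAdd s m) := by
      intro m; simp [row, Fin.append_left]
    have h2 : ∀ l : Fin s, row σ (Fin.natAdd d l) * y (Fin.natAdd d l)
        = (if l < σ.1 then w σ.1 σ.2 l * y (Fin.natAdd d l) else 0)
          - (if l = σ.1 then y (Fin.natAdd d l) else 0) := by
      intro l
      simp only [row, Fin.append_right, sub_mul]
      by_cases h : l < σ.1 <;> by_cases h' : l = σ.1 <;> simp [h, h']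
    rw [Finset.sum_congr rfl (fun m _ => h1 m), Finset.sum_congr rfl (fun l _ => h2 l),
      Finset.sum_sub_distrib, Finset.sum_ite_eq' Finset.univ σ.1
        (fun l => y (Fin.natAdd d l))]
    simp [Finset.sum_filter, add_sub_assoc]
  have hmem : ∀ y : Fin (d + s) → ℝ,
      (A.mulVec y ≤ 0 ∧ (0 : Matrix (Fin 0) (Fin (d + s)) ℝ).mulVec y = 0) ↔
      ∀ σ : Σ j : Fin s, Fin (k j),
        ∑ m, a σ.1 σ.2 m * y (Fin.castAdd s m) +
          ∑ l ∈ Finset.univ.filter (fun l => l < σ.1), w σ.1 σ.2 l * y (Fin.natAdd d l)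
          ≤ y (Fin.natAdd d σ.1) := by
    intro y
    constructor
    · rintro ⟨h, -⟩ σ
      have := h (ε σ)
      simp only [Matrix.mulVec, dotProduct, A, Equiv.symm_apply_apply,
        Pi.zero_apply] at this
      rw [hrowdot σ y] at this
      linarith
    · intro h
      refine ⟨fun r => ?_, funext fun i => i.elim0⟩
      simp only [Matrix.mulVec, dotProduct, A, Pi.zero_apply]
      rw [hrowdot (ε.symm r) y]
      have := h (ε.symm r)
      linarith
  ext p
  simp only [Set.mem_image, Set.mem_setOf_eq]
  constructor
  · rintro ⟨y, hy, rfl⟩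
    rw [hmem] at hy
    set x : Fin d → ℝ := fun m => y (Fin.castAdd s m) with hx
    set t : Fin s → ℝ := fun l => y (Fin.natAdd d l) with ht
    have key : ∀ n : ℕ, ∀ j : Fin s, (j : ℕ) < n → z j x ≤ t j := by
      intro n
      induction n with
      | zero => intro j hj; exact absurd hj (Nat.not_lt_zero _)
      | succ n IH =>
        intro j hj
        obtain ⟨i, hi⟩ := (hz j x).1
        have hival : z j x = ∑ m, a j i m * x m +
            ∑ l ∈ Finset.univ.filter (fun l => l < j), w j i l * z l x := hi.symm
        rw [hival]
        calc ∑ m, a j i m * x m +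
              ∑ l ∈ Finset.univ.filter (fun l => l < j), w j i l * z l x
            ≤ ∑ m, a j i m * x m +
              ∑ l ∈ Finset.univ.filter (fun l => l < j), w j i l * t l := by
                gcongr with l hl
                · exact hw j i l
                · exact IH l (lt_of_lt_of_le (Finset.mem_filter.1 hl).2
                    (Nat.lt_succ_iff.1 hj))
          _ ≤ t j := hy ⟨j, i⟩
    have hkey : z slast x ≤ t slast := key s slast slast.isLt
    show f (fun m => (π y) m.castSucc) ≤ (π y) (Fin.last d)
    have hclast : (π y) (Fin.last d) = t slast := by
      simp [hπ, g, Fin.lastCases_last, ht]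
    have hcx : (fun m => (π y) m.castSucc) = x := by
      funext m; simp [hπ, g, Fin.lastCases_castSucc, hx]
    rw [hclast, hcx, hf]
    exact hkey
  · intro hp
    set x : Fin d → ℝ := fun m => p m.castSucc with hx
    set t : Fin s → ℝ := fun l => if l = slast then p (Fin.last d) else z l x with ht
    refine ⟨Fin.append x t, ?_, ?_⟩
    · rw [hmem]
      intro σ
      simp only [Fin.append_left, Fin.append_right]
      have htz : ∀ l : Fin s, l < σ.1 → t l = z l x := by
        intro l hl
        have : l ≠ slast := by
          intro h; subst h
          have : (σ.1 : ℕ) ≤ s - 1 := Nat.le_sub_one_of_lt σ.1.isLt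
          exact absurd (lt_of_lt_of_le hl (Fin.le_def.2 this)) (lt_irrefl _)
        simp [ht, this]
      have hzt : z σ.1 x ≤ t σ.1 := by
        by_cases h : σ.1 = slast
        · rw [ht]; simp only [h, if_pos rfl]; rw [← h]
          have := hp; rw [hf] at this
          simpa [hx, h, epiSet] using this
        · simp [ht, h]
      calc ∑ m, a σ.1 σ.2 m * x m +
            ∑ l ∈ Finset.univ.filter (fun l => l < σ.1), w σ.1 σ.2 l * t l
          = ∑ m, a σ.1 σ.2 m * x m +
            ∑ l ∈ Finset.univ.filter (fun l => l < σ.1), w σ.1 σ.2 l * z l x := by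
            congr 1
            exact Finset.sum_congr rfl fun l hl => by
              rw [htz l (Finset.mem_filter.1 hl).2]
        _ ≤ z σ.1 x := (hz σ.1 x).2 ⟨σ.2, rfl⟩
        _ ≤ t σ.1 := hzt
    · funext i
      refine Fin.lastCases ?_ ?_ i
      · simp [hπ, g, Fin.lastCases_last, Fin.append_right, ht]
      · intro m
        simp [hπ, g, Fin.lastCases_castSucc, Fin.append_left, hx]
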